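/- Let Y be a finite-dimensional Hilbert space with complementary subspaces Y₁ and Y₂ (Y = Y₁ ⊕ Y₂ as a linear direct sum), and let p be the projection onto Y₁ along Y₂. Then for every subspace V ⊆ Y there exists a linear projection q : Y → Y with range V such that (1−p)qp = 0, i.e. q maps Y₁ into Y₁. -/

import Mathlib

/-- in a finite-dimensional Hilbert space `Y = Y₁ ⊕ Y₂` with projection `p`
onto `Y₁` along `Y₂`, every subspace `V` is the range of a (not necessarily orthogonal)
projection `q` with `(1 - p) q p = 0`, i.e. `q` maps `Y₁` into `Y₁`. -/
theorem projection_preserving_summand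
    {Y : Type*} [NormedAddCommGroup Y] [InnerProductSpace ℂ Y] [FiniteDimensional ℂ Y]
    (Y₁ Y₂ : Submodule ℂ Y) (hcompl : IsCompl Y₁ Y₂)
    (p : Y →ₗ[ℂ] Y) (hp : p ∘ₗ p = p)
    (hran : ∀ x : Y, p x ∈ Y₁) (hfix : ∀ x ∈ Y₁, p x = x) (hker : ∀ x ∈ Y₂, p x = 0)
    (V : Submodule ℂ Y) :
    ∃ q : Y →ₗ[ℂ] Y, q ∘ₗ q = q ∧ LinearMap.range q = V ∧
      ((LinearMap.id : Y →ₗ[ℂ] Y) - p) ∘ₗ (q ∘ₗ p) = 0 ∧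
      (∀ x ∈ Y₁, q x ∈ Y₁) := by
  classical
  set V₁ : Submodule ℂ Y := V ⊓ Y₁ with hV₁def
  set W₁ : Submodule ℂ Y := Y₁ ⊓ V₁ᗮ with hW₁def
  set Z : Submodule ℂ Y := (V ⊔ Y₁)ᗮ with hZdef
  set W : Submodule ℂ Y := W₁ ⊔ Z with hWdef
  -- every element of Y₁ splits as V₁ + W₁
  have hY1split : ∀ y ∈ Y₁, ∃ a ∈ V₁, ∃ b ∈ W₁, y = a + b := by
    intro y hy
    refine ⟨(V₁.orthogonalProjectionOnto y : Y), (V₁.orthogonalProjectionOnto y).2,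
      y - (V₁.orthogonalProjectionOnto y : Y), ⟨?_, ?_⟩, (add_sub_cancel _ _).symm⟩
    · exact Y₁.sub_mem hy (V₁.orthogonalProjectionOnto y).2.2
    · exact Submodule.sub_starProjection_mem_orthogonal (K := V₁) y
  have hcomplVW : IsCompl V W := by
    constructor
    · rw [Submodule.disjoint_def]
      intro x hxV hxW
      obtain ⟨w, hw, z, hz, hx⟩ := Submodule.mem_sup.mp hxW
      have hzVY : z ∈ V ⊔ Y₁ := by
        have : z = x - w := by rw [← hx, add_sub_cancel_left]
        rw [this]
        exact Submodule.sub_mem _ (Submodule.mem_sup_left hxV)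
          (Submodule.mem_sup_right hw.1)
      have hz0 : z = 0 :=
        (Submodule.disjoint_def.mp (V ⊔ Y₁).orthogonal_disjoint) z hzVY hz
      have hxw : x = w := by rw [← hx, hz0, add_zero]
      have hxV₁ : x ∈ V₁ := ⟨hxV, hxw ▸ hw.1⟩
      have hxV₁o : x ∈ V₁ᗮ := hxw ▸ hw.2
      exact (Submodule.disjoint_def.mp V₁.orthogonal_disjoint) x hxV₁ hxV₁o
    · rw [codisjoint_iff]
      have h1 : Y₁ ≤ V ⊔ W₁ := by
        intro y hy
        obtain ⟨a, ha, b, hb, rfl⟩ := hY1split y hy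
        exact Submodule.add_mem _ (Submodule.mem_sup_left ha.1)
          (Submodule.mem_sup_right hb)
      have h2 : V ⊔ Y₁ ≤ V ⊔ W₁ := sup_le le_sup_left h1
      have h3 : (V ⊔ Y₁) ⊔ Z = ⊤ :=
        Submodule.sup_orthogonal_of_hasOrthogonalProjection
      rw [eq_top_iff, ← h3, hWdef]
      calc (V ⊔ Y₁) ⊔ Z ≤ (V ⊔ W₁) ⊔ Z := sup_le_sup_right h2 Z
        _ ≤ V ⊔ (W₁ ⊔ Z) := by rw [sup_assoc]
  set q : Y →ₗ[ℂ] Y := V.subtype ∘ₗ V.projectionOnto W hcomplVW with hqdef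
  have hqmem : ∀ x : Y, q x ∈ V := fun x => (V.projectionOnto W hcomplVW x).2
  have hqfix : ∀ x ∈ V, q x = x := by
    intro x hx
    simp only [hqdef, LinearMap.comp_apply, Submodule.subtype_apply]
    rw [Submodule.projectionOnto_apply_left hcomplVW ⟨x, hx⟩]
  have hqzero : ∀ x ∈ W, q x = 0 := by
    intro x hx
    simp only [hqdef, LinearMap.comp_apply, Submodule.subtype_apply]
    rw [Submodule.projectionOnto_apply_right hcomplVW ⟨x, hx⟩]
    rfl
  have hqY₁ : ∀ x ∈ Y₁, q x ∈ Y₁ := by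
    intro y hy
    obtain ⟨a, ha, b, hb, rfl⟩ := hY1split y hy
    rw [map_add, hqfix a ha.1, hqzero b (Submodule.mem_sup_left hb), add_zero]
    exact ha.2
  refine ⟨q, ?_, ?_, ?_, hqY₁⟩
  · ext x
    exact hqfix (q x) (hqmem x)
  · apply le_antisymm
    · rintro _ ⟨x, rfl⟩; exact hqmem x
    · intro v hv
      exact ⟨v, hqfix v hv⟩
  · ext x
    simp only [LinearMap.comp_apply, LinearMap.sub_apply, LinearMap.id_apply,
      LinearMap.zero_apply]
    rw [hfix _ (hqY₁ (p x) (hran x))]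
    exact sub_self _
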